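/- If P ≡ Q (structural congruence of LCC processes) then P† and Q† are logically equivalent in intuitionistic linear logic. -/

import Mathlib

/-- Formulas of first-order intuitionistic linear logic, with de Bruijn
indices for variables (terms are variables). -/
inductive Fm : Type
  | atom : ℕ → List ℕ → Fm
  | one : Fm
  | top : Fm
  | tensor : Fm → Fm → Fm
  | limp : Fm → Fm → Fm
  | with_ : Fm → Fm → Fm
  | bang : Fm → Fm
  | ex : Fm → Fm
  | all : Fm → Fm

namespace Fm

/-- Push a renaming of free variables under a binder. -/
def under (f : ℕ → ℕ) : ℕ → ℕ
  | 0 => 0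
  | n + 1 => f n + 1

/-- Renaming the free variables of a formula. -/
def ren (f : ℕ → ℕ) : Fm → Fm
  | atom p args => atom p (args.map f)
  | one => one
  | top => top
  | tensor A B => tensor (ren f A) (ren f B)
  | limp A B => limp (ren f A) (ren f B)
  | with_ A B => with_ (ren f A) (ren f B)
  | bang A => bang (ren f A)
  | ex A => ex (ren (under f) A)
  | all A => all (ren (under f) A)

/-- Lifting: shift all free variables by one (to go under a binder). -/
def lift (A : Fm) : Fm := ren Nat.succ A

/-- `substAt k t A` substitutes the variable `t` for the de Bruijn index `k`
in `A`, lowering the indices above `k`. -/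
def substAt (k t : ℕ) : Fm → Fm
  | atom p args => atom p (args.map fun n => if n = k then t else if k < n then n - 1 else n)
  | one => one
  | top => top
  | tensor A B => tensor (substAt k t A) (substAt k t B)
  | limp A B => limp (substAt k t A) (substAt k t B)
  | with_ A B => with_ (substAt k t A) (substAt k t B)
  | bang A => bang (substAt k t A)
  | ex A => ex (substAt (k + 1) (t + 1) A)
  | all A => all (substAt (k + 1) (t + 1) A)

/-- Substitution of a variable for the de Bruijn index `0`. -/
def subst (t : ℕ) (A : Fm) : Fm := substAt 0 t A

end Fm

open Fm

/-- Sequent calculus for first-order intuitionistic linear logic: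
`Der Γ A` means `Γ ⊢ A`. -/
inductive Der : List Fm → Fm → Prop
  | id (A) : Der [A] A
  | exch {Γ Δ A} (h : Γ.Perm Δ) : Der Γ A → Der Δ A
  | cut {Γ Δ A C} : Der Γ A → Der (A :: Δ) C → Der (Γ ++ Δ) C
  | one_r : Der [] one
  | one_l {Γ A} : Der Γ A → Der (one :: Γ) A
  | top_r (Γ) : Der Γ top
  | tensor_r {Γ Δ A B} : Der Γ A → Der Δ B → Der (Γ ++ Δ) (tensor A B)
  | tensor_l {Γ A B C} : Der (A :: B :: Γ) C → Der (tensor A B :: Γ) C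
  | limp_r {Γ A B} : Der (A :: Γ) B → Der Γ (limp A B)
  | limp_l {Γ Δ A B C} : Der Γ A → Der (B :: Δ) C → Der (limp A B :: (Γ ++ Δ)) C
  | with_r {Γ A B} : Der Γ A → Der Γ B → Der Γ (with_ A B)
  | with_l1 {Γ A B C} : Der (A :: Γ) C → Der (with_ A B :: Γ) C
  | with_l2 {Γ A B C} : Der (B :: Γ) C → Der (with_ A B :: Γ) C
  | bang_l {Γ A C} : Der (A :: Γ) C → Der (bang A :: Γ) C
  | bang_w {Γ A C} : Der Γ C → Der (bang A :: Γ) C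
  | bang_c {Γ A C} : Der (bang A :: bang A :: Γ) C → Der (bang A :: Γ) C
  | bang_r {Γ : List Fm} {A} : Der (Γ.map bang) A → Der (Γ.map bang) (bang A)
  | ex_r {Γ A} (t : ℕ) : Der Γ (subst t A) → Der Γ (ex A)
  | ex_l {Γ A C} : Der (A :: Γ.map lift) (lift C) → Der (ex A :: Γ) C
  | all_r {Γ : List Fm} {A} : Der (Γ.map lift) A → Der Γ (all A)
  | all_l {Γ A C} (t : ℕ) : Der (subst t A :: Γ) C → Der (all A :: Γ) C

/-- Entailment between single formulas. -/
def Entails (A B : Fm) : Prop := Der [A] B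

/-- Logical equivalence: mutual derivability. -/
def LEquiv (A B : Fm) : Prop := Entails A B ∧ Entails B A

/-- LCC processes over the linear constraint formulas `Fm`, with de Bruijn
binders for hiding and for the universally quantified ask. -/
inductive Proc : Type
  | tell : Fm → Proc
  | par : Proc → Proc → Proc
  | sum : Proc → Proc → Proc
  | hide : Proc → Proc
  | repl : Proc → Proc
  | ask : Fm → Proc → Proc

namespace Proc

/-- Renaming the free variables of a process. -/
def pren (f : ℕ → ℕ) : Proc → Proc
  | tell c => tell (Fm.ren f c)
  | par P Q => par (pren f P) (pren f Q)
  | sum P Q => sum (pren f P) (pren f Q)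
  | hide P => hide (pren (Fm.under f) P)
  | repl P => repl (pren f P)
  | ask c P => ask (Fm.ren (Fm.under f) c) (pren (Fm.under f) P)

/-- The translation `†` of LCC processes into linear logic formulas. -/
def trans : Proc → Fm
  | tell c => Fm.tensor c Fm.top
  | par P Q => Fm.tensor (trans P) (trans Q)
  | sum P Q => Fm.tensor (Fm.with_ (trans P) (trans Q)) Fm.top
  | hide P => Fm.ex (trans P)
  | repl P => Fm.tensor (Fm.bang (trans P)) Fm.top
  | ask c P => Fm.tensor (Fm.all (Fm.limp c (trans P))) Fm.top

end Proc

open Proc in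
/-- Structural congruence of LCC processes (de Bruijn presentation, in which
α-conversion is automatic). -/
inductive SC : Proc → Proc → Prop
  | refl (P) : SC P P
  | symm {P Q} : SC P Q → SC Q P
  | trans {P Q R} : SC P Q → SC Q R → SC P R
  | par_comm (P Q) : SC (par P Q) (par Q P)
  | par_assoc (P Q R) : SC (par (par P Q) R) (par P (par Q R))
  | sum_comm (P Q) : SC (sum P Q) (sum Q P)
  | sum_assoc (P Q R) : SC (sum (sum P Q) R) (sum P (sum Q R))
  | par_one (P) : SC (par P (tell Fm.one)) P
  | hide_one : SC (hide (tell Fm.one)) (tell Fm.one)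
  | hide_swap (P) :
      SC (hide (hide P))
        (hide (hide (pren (fun n => if n = 0 then 1 else if n = 1 then 0 else n) P)))
  | repl_unfold (P) : SC (repl P) (par P (repl P))
  | tell_merge {c d e} (h : LEquiv (Fm.tensor c d) e) :
      SC (par (tell c) (tell d)) (tell e)
  | scope (P Q) : SC (par P (hide Q)) (hide (par (pren Nat.succ P) Q))
  | ctx_par {P P'} (Q) : SC P P' → SC (par P Q) (par P' Q)
  | ctx_hide {P P'} : SC P P' → SC (hide P) (hide P')

namespace SCProof

open Fm Proc

/-! ### Renaming and substitution lemmas -/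

theorem ren_congr {f g : ℕ → ℕ} (h : ∀ n, f n = g n) (A : Fm) :
    ren f A = ren g A := by
  have : f = g := funext h
  rw [this]

theorem under_comp (f g : ℕ → ℕ) (n : ℕ) :
    under (f ∘ g) n = under f (under g n) := by
  cases n <;> rfl

theorem ren_comp (f g : ℕ → ℕ) (A : Fm) :
    ren f (ren g A) = ren (f ∘ g) A := by
  induction A generalizing f g with
  | atom p args => simp [ren, List.map_map]
  | one => rfl
  | top => rfl
  | tensor A B ihA ihB => simp [ren, ihA, ihB]
  | limp A B ihA ihB => simp [ren, ihA, ihB]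
  | with_ A B ihA ihB => simp [ren, ihA, ihB]
  | bang A ih => simp [ren, ih]
  | ex A ih => simp [ren, ih]; exact ren_congr (fun n => (under_comp f g n).symm) A
  | all A ih => simp [ren, ih]; exact ren_congr (fun n => (under_comp f g n).symm) A

theorem ren_id (A : Fm) : ren id A = A := by
  induction A with
  | atom p args => simp [ren]
  | one => rfl
  | top => rfl
  | tensor A B ihA ihB => simp [ren, ihA, ihB]
  | limp A B ihA ihB => simp [ren, ihA, ihB]
  | with_ A B ihA ihB => simp [ren, ihA, ihB]
  | bang A ih => simp [ren, ih]
  | ex A ih =>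
      simp [ren]
      rw [ren_congr (g := id) (fun n => by cases n <;> rfl) A]; exact ih
  | all A ih =>
      simp [ren]
      rw [ren_congr (g := id) (fun n => by cases n <;> rfl) A]; exact ih

theorem ren_eq_self {f : ℕ → ℕ} (h : ∀ n, f n = n) (A : Fm) : ren f A = A := by
  rw [ren_congr (g := id) h A, ren_id]

/-- The function applied to variables by `substAt k t`. -/
def sfn (k t : ℕ) (m : ℕ) : ℕ := if m = k then t else if k < m then m - 1 else m

theorem substAt_ren (k t : ℕ) (g : ℕ → ℕ) (A : Fm) :
    substAt k t (ren g A) = ren (fun n => sfn k t (g n)) A := by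
  induction A generalizing k t g with
  | atom p args => simp only [ren, substAt, List.map_map]; rfl
  | one => rfl
  | top => rfl
  | tensor A B ihA ihB => simp [ren, substAt, ihA, ihB]
  | limp A B ihA ihB => simp [ren, substAt, ihA, ihB]
  | with_ A B ihA ihB => simp [ren, substAt, ihA, ihB]
  | bang A ih => simp [ren, substAt, ih]
  | ex A ih =>
      simp [ren, substAt, ih]
      exact ren_congr (fun n => by
        cases n with
        | zero => simp [under, sfn]
        | succ n => simp only [under, sfn]; by_cases h1 : g n = k <;> by_cases h2 : k < g n <;> simp [h1, h2] <;> omega) A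
  | all A ih =>
      simp [ren, substAt, ih]
      exact ren_congr (fun n => by
        cases n with
        | zero => simp [under, sfn]
        | succ n => simp only [under, sfn]; by_cases h1 : g n = k <;> by_cases h2 : k < g n <;> simp [h1, h2] <;> omega) A

theorem substAt_ren_eq {k t : ℕ} {g g' : ℕ → ℕ} (h : ∀ n, sfn k t (g n) = g' n)
    (A : Fm) : substAt k t (ren g A) = ren g' A := by
  rw [substAt_ren]; exact ren_congr h A

theorem substAt_ren_self {k t : ℕ} {g : ℕ → ℕ} (h : ∀ n, sfn k t (g n) = n)
    (A : Fm) : substAt k t (ren g A) = A := by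
  rw [substAt_ren]; exact ren_eq_self h A

theorem subst_ren_under (A : Fm) :
    subst 0 (ren (under Nat.succ) A) = A := by
  unfold subst
  exact substAt_ren_self (fun n => by
    cases n <;> simp [under, sfn]) A

theorem trans_pren (f : ℕ → ℕ) (P : Proc) :
    (pren f P).trans = ren f P.trans := by
  induction P generalizing f with
  | tell c => simp [pren, Proc.trans, ren]
  | par P Q ihP ihQ => simp [pren, Proc.trans, ren, ihP, ihQ]
  | sum P Q ihP ihQ => simp [pren, Proc.trans, ren, ihP, ihQ]
  | hide P ih => simp [pren, Proc.trans, ren, ih]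
  | repl P ih => simp [pren, Proc.trans, ren, ih]
  | ask c P ih => simp [pren, Proc.trans, ren, ih]

/-! ### Derivability helpers -/

theorem ent_trans {A B C : Fm} (h1 : Der [A] B) (h2 : Der [B] C) : Der [A] C := by
  have := Der.cut (Δ := []) h1 h2
  simpa using this

theorem cut_nil {Γ : List Fm} {A C : Fm} (h1 : Der Γ A) (h2 : Der [A] C) :
    Der Γ C := by
  have := Der.cut (Δ := []) h1 h2
  simpa using this

theorem tensor_r_nil {Γ : List Fm} {A : Fm} (h : Der Γ A) :
    Der Γ (Fm.tensor A Fm.top) := by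
  have := Der.tensor_r (Δ := []) h (Der.top_r [])
  simpa using this

theorem der_ren_id {f : ℕ → ℕ} {A : Fm} (h : ∀ n, f n = n) : Der [A] (ren f A) := by
  rw [ren_eq_self h]
  exact Der.id A

theorem pswap (a b : Fm) (l : List Fm) : (a :: b :: l).Perm (b :: a :: l) :=
  List.Perm.swap b a l

theorem rot3 (a b c : Fm) (l : List Fm) : (a :: b :: c :: l).Perm (b :: c :: a :: l) :=
  (pswap a b _).trans (List.Perm.cons b (pswap a c l))

theorem ten_mono {A A' B B' : Fm} (h1 : Der [A] A') (h2 : Der [B] B') :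
    Der [tensor A B] (tensor A' B') :=
  Der.tensor_l (Der.tensor_r h1 h2)

theorem ex_mono {A A' : Fm} (h : Der [A] A') : Der [ex A] (ex A') := by
  apply Der.ex_l (Γ := [])
  show Der [A] (ex (ren (under Nat.succ) A'))
  apply Der.ex_r 0
  rw [subst_ren_under]
  exact h

/-- `⊤`-absorption: every translated process absorbs a `⊤`. -/
theorem absorb (P : Proc) : Der [P.trans, top] P.trans := by
  induction P with
  | tell c =>
      exact Der.tensor_l (Der.tensor_r (Der.id c) (Der.top_r [top, top]))
  | par P Q ihP ihQ =>
      exact Der.tensor_l (Der.tensor_r (Der.id P.trans) ihQ)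
  | sum P Q ihP ihQ =>
      exact Der.tensor_l (Der.tensor_r (Der.id _) (Der.top_r [top, top]))
  | hide P ih =>
      apply Der.ex_l (Γ := [top])
      show Der [P.trans, top] (ex (ren (under Nat.succ) P.trans))
      apply Der.ex_r 0
      rw [subst_ren_under]
      exact ih
  | repl P ih =>
      exact Der.tensor_l (Der.tensor_r (Der.id _) (Der.top_r [top, top]))
  | ask c P ih =>
      exact Der.tensor_l (Der.tensor_r (Der.id _) (Der.top_r [top, top]))

theorem absorb2 {X : Fm} (h : Der [X, top] X) : Der [X, top, top] X :=
  Der.cut (Γ := [X, top]) (Δ := [top]) h h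

/-! ### The individual congruence axioms -/

theorem ten_comm (A B : Fm) : Der [tensor A B] (tensor B A) :=
  Der.tensor_l (Der.exch (pswap B A []) (Der.tensor_r (Der.id B) (Der.id A)))

theorem ten_assoc1 (A B C : Fm) :
    Der [tensor (tensor A B) C] (tensor A (tensor B C)) :=
  Der.tensor_l (Der.tensor_l
    (Der.tensor_r (Der.id A) (Der.tensor_r (Der.id B) (Der.id C))))

theorem ten_assoc2 (A B C : Fm) :
    Der [tensor A (tensor B C)] (tensor (tensor A B) C) := by
  apply Der.tensor_l
  apply Der.exch (pswap (tensor B C) A [])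
  -- context [tensor B C, A]
  apply Der.tensor_l
  -- context [B, C, A]
  apply Der.exch (rot3 A B C [])
  exact Der.tensor_r (Der.tensor_r (Der.id A) (Der.id B)) (Der.id C)

theorem par_one_fwd (P : Proc) :
    Der [tensor P.trans (tensor one top)] P.trans := by
  apply Der.tensor_l
  apply Der.exch (pswap (tensor one top) P.trans [])
  apply Der.tensor_l
  apply Der.one_l
  apply Der.exch (pswap P.trans top [])
  exact absorb P

theorem par_one_bwd (P : Proc) :
    Der [P.trans] (tensor P.trans (tensor one top)) :=
  Der.tensor_r (Der.id _) (Der.tensor_r Der.one_r (Der.top_r []))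

theorem sum_comm_lem (A B : Fm) :
    Der [tensor (with_ A B) top] (tensor (with_ B A) top) :=
  Der.tensor_l (Der.tensor_r
    (Der.with_r (Der.with_l2 (Der.id B)) (Der.with_l1 (Der.id A)))
    (Der.top_r [top]))

theorem sum_assoc_fwd {A B C : Fm} (hA : Der [A, top] A) (hB : Der [B, top] B)
    (hC : Der [C, top] C) :
    Der [tensor (with_ (tensor (with_ A B) top) C) top]
      (tensor (with_ A (tensor (with_ B C) top)) top) := by
  apply Der.tensor_l
  apply tensor_r_nil
  apply Der.with_r
  · exact Der.with_l1 (Der.tensor_l (Der.with_l1 (absorb2 hA)))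
  · apply tensor_r_nil
    apply Der.with_r
    · exact Der.with_l1 (Der.tensor_l (Der.with_l2 (absorb2 hB)))
    · exact Der.with_l2 hC

theorem sum_assoc_bwd {A B C : Fm} (hA : Der [A, top] A) (hB : Der [B, top] B)
    (hC : Der [C, top] C) :
    Der [tensor (with_ A (tensor (with_ B C) top)) top]
      (tensor (with_ (tensor (with_ A B) top) C) top) := by
  apply Der.tensor_l
  apply tensor_r_nil
  apply Der.with_r
  · apply tensor_r_nil
    apply Der.with_r
    · exact Der.with_l1 hA
    · exact Der.with_l2 (Der.tensor_l (Der.with_l1 (absorb2 hB)))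
  · exact Der.with_l2 (Der.tensor_l (Der.with_l2 (absorb2 hC)))

theorem hide_one_fwd : Der [ex (tensor one top)] (tensor one top) :=
  Der.ex_l (Γ := []) (Der.id _)

theorem hide_one_bwd : Der [tensor one top] (ex (tensor one top)) :=
  Der.ex_r 0 (Der.id _)

theorem repl_fwd (A : Fm) :
    Der [tensor (bang A) top] (tensor A (tensor (bang A) top)) := by
  apply Der.tensor_l
  apply Der.bang_c
  exact Der.tensor_r (Der.bang_l (Der.id A))
    (Der.tensor_r (Der.id (bang A)) (Der.top_r [top]))

theorem repl_bwd (A : Fm) :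
    Der [tensor A (tensor (bang A) top)] (tensor (bang A) top) := by
  apply Der.tensor_l
  apply Der.exch (pswap (tensor (bang A) top) A [])
  apply Der.tensor_l
  exact Der.tensor_r (Der.id (bang A)) (Der.top_r [top, A])

theorem tell_merge_fwd {c d e : Fm} (h : Der [tensor c d] e) :
    Der [tensor (tensor c top) (tensor d top)] (tensor e top) := by
  apply Der.tensor_l
  apply Der.tensor_l
  -- context [c, ⊤, d⊗⊤]
  apply Der.exch (rot3 (tensor d top) c top [])
  apply Der.tensor_l
  -- context [d, ⊤, c, ⊤]; move to [c, d, ⊤, ⊤]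
  apply Der.exch (rot3 c d top [top])
  -- context [c, d, ⊤, ⊤]
  refine Der.tensor_r (Γ := [c, d]) ?_ (Der.top_r [top, top])
  exact cut_nil (Der.tensor_r (Der.id c) (Der.id d)) h

theorem tell_merge_bwd {c d e : Fm} (h : Der [e] (tensor c d)) :
    Der [tensor e top] (tensor (tensor c top) (tensor d top)) := by
  apply Der.tensor_l
  refine Der.cut (Γ := [e]) (Δ := [top]) h ?_
  apply Der.tensor_l
  exact Der.tensor_r (Der.tensor_r (Der.id c) (Der.top_r []))
    (Der.tensor_r (Der.id d) (Der.top_r [top]))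

theorem scope_fwd (A B : Fm) :
    Der [tensor A (ex B)] (ex (tensor (ren Nat.succ A) B)) := by
  apply Der.tensor_l
  apply Der.exch (pswap (ex B) A [])
  apply Der.ex_l (Γ := [A])
  show Der [B, ren Nat.succ A]
    (ex (tensor (ren (under Nat.succ) (ren Nat.succ A)) (ren (under Nat.succ) B)))
  apply Der.ex_r 0
  show Der [B, ren Nat.succ A]
    (tensor (substAt 0 0 (ren (under Nat.succ) (ren Nat.succ A)))
      (substAt 0 0 (ren (under Nat.succ) B)))
  rw [ren_comp, substAt_ren_eq (g' := Nat.succ)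
    (fun n => by cases n <;> simp [under, sfn, Function.comp]) A,
    substAt_ren_self (fun n => by cases n <;> simp [under, sfn]) B]
  apply Der.exch (pswap (ren Nat.succ A) B [])
  exact Der.tensor_r (Der.id _) (Der.id _)

theorem scope_bwd (A B : Fm) :
    Der [ex (tensor (ren Nat.succ A) B)] (tensor A (ex B)) := by
  apply Der.ex_l (Γ := [])
  show Der [tensor (ren Nat.succ A) B]
    (tensor (ren Nat.succ A) (ex (ren (under Nat.succ) B)))
  apply Der.tensor_l
  refine Der.tensor_r (Der.id _) ?_
  apply Der.ex_r 0
  rw [subst_ren_under]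
  exact Der.id B

/-- The variable swap used in `hide_swap`. -/
def sw : ℕ → ℕ := fun n => if n = 0 then 1 else if n = 1 then 0 else n

theorem exex_swap (A : Fm) : Der [ex (ex A)] (ex (ex (ren sw A))) := by
  apply Der.ex_l (Γ := [])
  show Der [ex A]
    (ex (ex (ren (under (under Nat.succ)) (ren sw A))))
  apply Der.ex_l (Γ := [])
  show Der [A]
    (ex (ex (ren (under (under Nat.succ)) (ren (under (under Nat.succ)) (ren sw A)))))
  apply Der.ex_r 0
  show Der [A]
    (ex (substAt 1 1
      (ren (under (under Nat.succ)) (ren (under (under Nat.succ)) (ren sw A)))))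
  apply Der.ex_r 1
  show Der [A]
    (substAt 0 1 (substAt 1 1
      (ren (under (under Nat.succ)) (ren (under (under Nat.succ)) (ren sw A)))))
  rw [ren_comp, ren_comp, substAt_ren, substAt_ren]
  exact der_ren_id (fun n => by
    rcases n with _ | _ | n <;>
      simp [under, sfn, sw, Function.comp])

theorem sw_sw (A : Fm) : ren sw (ren sw A) = A := by
  rw [ren_comp]
  exact ren_eq_self (fun n => by
    rcases n with _ | _ | n <;> simp [sw, Function.comp]) A

end SCProof

open SCProof in
/-- structurally congruent processes have logically equivalent
translations. -/
theorem sc_logical_equiv {P Q : Proc} (h : SC P Q) :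
    LEquiv P.trans Q.trans := by
  induction h with
  | refl P => exact ⟨Der.id _, Der.id _⟩
  | symm _ ih => exact ⟨ih.2, ih.1⟩
  | trans _ _ ih1 ih2 => exact ⟨ent_trans ih1.1 ih2.1, ent_trans ih2.2 ih1.2⟩
  | par_comm P Q => exact ⟨ten_comm _ _, ten_comm _ _⟩
  | par_assoc P Q R => exact ⟨ten_assoc1 _ _ _, ten_assoc2 _ _ _⟩
  | sum_comm P Q => exact ⟨sum_comm_lem _ _, sum_comm_lem _ _⟩
  | sum_assoc P Q R =>
      exact ⟨sum_assoc_fwd (absorb P) (absorb Q) (absorb R),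
        sum_assoc_bwd (absorb P) (absorb Q) (absorb R)⟩
  | par_one P => exact ⟨par_one_fwd P, par_one_bwd P⟩
  | hide_one => exact ⟨hide_one_fwd, hide_one_bwd⟩
  | hide_swap P =>
      constructor
      · show Der [Fm.ex (Fm.ex P.trans)] _
        have := exex_swap P.trans
        simp only [Proc.trans, trans_pren] at this ⊢; exact this
      · show Der _ (Fm.ex (Fm.ex P.trans))
        have h1 := exex_swap (Fm.ren sw P.trans)
        rw [sw_sw] at h1
        simp only [Proc.trans, trans_pren] at h1 ⊢; exact h1
  | repl_unfold P => exact ⟨repl_fwd _, repl_bwd _⟩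
  | tell_merge h => exact ⟨tell_merge_fwd h.1, tell_merge_bwd h.2⟩
  | scope P Q =>
      constructor
      · have := scope_fwd P.trans Q.trans
        simpa [Proc.trans, trans_pren, Entails] using this
      · have := scope_bwd P.trans Q.trans
        simpa [Proc.trans, trans_pren, Entails] using this
  | ctx_par Q _ ih => exact ⟨ten_mono ih.1 (Der.id _), ten_mono ih.2 (Der.id _)⟩
  | ctx_hide _ ih => exact ⟨ex_mono ih.1, ex_mono ih.2⟩
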